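/- Let Λ be a finite index set equipped with a pseudometric dist, and let J, R, ℓ > 0. Let v, h ∈ Matrix Λ Λ ℂ satisfy ‖v‖ ≤ J, ‖h‖ ≤ J, and v_{ij} = 0 whenever dist(i, j) > R. Then for any unit vectors ψ, φ ∈ ℂ^Λ whose supports are at distance greater than 2ℓ + R, one has |⟨ψ, [[v, h], h] φ⟩| ≤ 8 J² ‖h‖_ℓ; equivalently, ‖[[v,h],h]‖_{2ℓ+R} ≤ 8 J² ‖h‖_ℓ. -/

import Mathlib

/-- The l2 -> l2 operator norm of a matrix. -/
noncomputable def matOpNorm {Λ : Type*} [Fintype Λ] [DecidableEq Λ]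
    (m : Matrix Λ Λ ℂ) : ℝ :=
  ‖Matrix.toEuclideanCLM (𝕜 := ℂ) m‖

/-- The quantity ‖m‖_r : the supremum of |⟨ψ, m φ⟩| over l2-unit vectors ψ, φ whose
supports are at distance greater than r (all pairwise distances exceed r). -/
noncomputable def matDistNorm {Λ : Type*} [Fintype Λ] [DecidableEq Λ]
    [PseudoMetricSpace Λ] (m : Matrix Λ Λ ℂ) (r : ℝ) : ℝ :=
  sSup { x : ℝ | ∃ ψ φ : EuclideanSpace ℂ Λ, ‖ψ‖ = 1 ∧ ‖φ‖ = 1 ∧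
    (∀ i ∈ Function.support ψ, ∀ j ∈ Function.support φ, r < dist i j) ∧
    x = ‖(inner ℂ ψ (Matrix.toEuclideanCLM (𝕜 := ℂ) m φ) : ℂ)‖ }

section Aux

variable {Λ : Type*} [Fintype Λ] [DecidableEq Λ] [PseudoMetricSpace Λ]

lemma toCLM_apply' (m : Matrix Λ Λ ℂ) (x : EuclideanSpace ℂ Λ) (i : Λ) :
    Matrix.toEuclideanCLM (𝕜 := ℂ) m x i = ∑ j, m i j * x j := by
  have h2 := congrFun (Matrix.ofLp_toEuclideanCLM (𝕜 := ℂ) m x) i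
  simpa [Matrix.mulVec, dotProduct] using h2

lemma norm_toCLM_apply_le (m : Matrix Λ Λ ℂ) {J : ℝ} (hm : matOpNorm m ≤ J)
    (x : EuclideanSpace ℂ Λ) : ‖Matrix.toEuclideanCLM (𝕜 := ℂ) m x‖ ≤ J * ‖x‖ := by
  calc ‖Matrix.toEuclideanCLM (𝕜 := ℂ) m x‖
      ≤ ‖Matrix.toEuclideanCLM (𝕜 := ℂ) m‖ * ‖x‖ := ContinuousLinearMap.le_opNorm _ _
    _ ≤ J * ‖x‖ := by
        apply mul_le_mul_of_nonneg_right _ (norm_nonneg _)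
        exact hm

lemma support_toCLM (m : Matrix Λ Λ ℂ) (x : EuclideanSpace ℂ Λ) (r : ℝ)
    (hm : ∀ i j, r < dist i j → m i j = 0) (i : Λ)
    (hi : i ∈ Function.support (Matrix.toEuclideanCLM (𝕜 := ℂ) m x)) :
    ∃ j ∈ Function.support x, dist i j ≤ r := by
  by_contra hc
  push_neg at hc
  apply hi
  show Matrix.toEuclideanCLM (𝕜 := ℂ) m x i = 0
  rw [toCLM_apply']
  apply Finset.sum_eq_zero
  intro j _
  by_cases hj : x j = 0
  · simp [hj]
  · rw [hm i j (hc j hj)]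
    simp

/-- Diagonal (multiplication) projection onto a subset of sites. -/
noncomputable def projVec (S : Set Λ) (x : EuclideanSpace ℂ Λ) : EuclideanSpace ℂ Λ :=
  WithLp.toLp 2 (S.indicator x)

lemma projVec_apply_mem {S : Set Λ} (x : EuclideanSpace ℂ Λ) {i : Λ} (hi : i ∈ S) :
    projVec S x i = x i := Set.indicator_of_mem hi x

lemma projVec_apply_not_mem {S : Set Λ} (x : EuclideanSpace ℂ Λ) {i : Λ} (hi : i ∉ S) :
    projVec S x i = 0 := Set.indicator_of_notMem hi x

lemma support_projVec (S : Set Λ) (x : EuclideanSpace ℂ Λ) :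
    Function.support (projVec S x) ⊆ S := by
  intro i hi
  by_contra hc
  apply hi
  show projVec S x i = 0
  exact projVec_apply_not_mem x hc

lemma projVec_add_compl (S : Set Λ) (x : EuclideanSpace ℂ Λ) :
    projVec S x + projVec Sᶜ x = x := by
  ext i
  have h : (projVec S x + projVec Sᶜ x) i = projVec S x i + projVec Sᶜ x i := rfl
  rw [h]
  by_cases hi : i ∈ S
  · rw [projVec_apply_mem x hi, projVec_apply_not_mem x (by simpa using hi), add_zero]
  · rw [projVec_apply_not_mem x hi, projVec_apply_mem x (by simpa using hi), zero_add]

lemma norm_projVec_le (S : Set Λ) (x : EuclideanSpace ℂ Λ) :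
    ‖projVec S x‖ ≤ ‖x‖ := by
  rw [EuclideanSpace.norm_eq, EuclideanSpace.norm_eq]
  apply Real.sqrt_le_sqrt
  apply Finset.sum_le_sum
  intro i _
  by_cases hi : i ∈ S
  · rw [projVec_apply_mem x hi]
  · rw [projVec_apply_not_mem x hi]
    norm_num

lemma inner_projVec_compl (S : Set Λ) (x y : EuclideanSpace ℂ Λ) :
    (inner ℂ (projVec S x) (projVec Sᶜ y) : ℂ) = 0 := by
  rw [PiLp.inner_apply]
  apply Finset.sum_eq_zero
  intro i _
  rw [RCLike.inner_apply']
  by_cases hi : i ∈ S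
  · rw [projVec_apply_not_mem y (by simpa using hi), mul_zero]
  · rw [projVec_apply_not_mem x hi, map_zero, zero_mul]

lemma matDistNorm_nonneg (m : Matrix Λ Λ ℂ) (r : ℝ) : 0 ≤ matDistNorm m r := by
  apply Real.sSup_nonneg
  rintro x ⟨ψ, φ, -, -, -, rfl⟩
  positivity

lemma matDistNorm_bddAbove (m : Matrix Λ Λ ℂ) (r : ℝ) :
    BddAbove { x : ℝ | ∃ ψ φ : EuclideanSpace ℂ Λ, ‖ψ‖ = 1 ∧ ‖φ‖ = 1 ∧
      (∀ i ∈ Function.support ψ, ∀ j ∈ Function.support φ, r < dist i j) ∧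
      x = ‖(inner ℂ ψ (Matrix.toEuclideanCLM (𝕜 := ℂ) m φ) : ℂ)‖ } := by
  refine ⟨matOpNorm m, ?_⟩
  rintro x ⟨ψ, φ, hψ, hφ, -, rfl⟩
  calc ‖(inner ℂ ψ (Matrix.toEuclideanCLM (𝕜 := ℂ) m φ) : ℂ)‖
      ≤ ‖ψ‖ * ‖Matrix.toEuclideanCLM (𝕜 := ℂ) m φ‖ := norm_inner_le_norm _ _
    _ ≤ ‖ψ‖ * (matOpNorm m * ‖φ‖) := by
        apply mul_le_mul_of_nonneg_left (ContinuousLinearMap.le_opNorm _ _) (norm_nonneg _)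
    _ = matOpNorm m := by rw [hψ, hφ]; ring

/-- Core estimate: the pairing of two vectors with separated supports through `m`
is controlled by `matDistNorm m r`. -/
lemma inner_bound (m : Matrix Λ Λ ℂ) (r : ℝ) (α β : EuclideanSpace ℂ Λ)
    (hsep : ∀ i ∈ Function.support α, ∀ j ∈ Function.support β, r < dist i j) :
    ‖(inner ℂ α (Matrix.toEuclideanCLM (𝕜 := ℂ) m β) : ℂ)‖ ≤
      matDistNorm m r * (‖α‖ * ‖β‖) := by
  rcases eq_or_ne α 0 with rfl | hα
  · simp
  rcases eq_or_ne β 0 with rfl | hβ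
  · simp
  have hαn : ‖α‖ ≠ 0 := norm_ne_zero_iff.mpr hα
  have hβn : ‖β‖ ≠ 0 := norm_ne_zero_iff.mpr hβ
  set cα : ℂ := (‖α‖ : ℂ)⁻¹ with hcα
  set cβ : ℂ := (‖β‖ : ℂ)⁻¹ with hcβ
  have hcαn : cα ≠ 0 := by simp [hcα, hαn]
  have hcβn : cβ ≠ 0 := by simp [hcβ, hβn]
  set α' : EuclideanSpace ℂ Λ := cα • α with hα'
  set β' : EuclideanSpace ℂ Λ := cβ • β with hβ'
  have hnα' : ‖α'‖ = 1 := by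
    rw [hα', norm_smul, hcα]
    simp [abs_of_nonneg (norm_nonneg α), inv_mul_cancel₀ hαn]
  have hnβ' : ‖β'‖ = 1 := by
    rw [hβ', norm_smul, hcβ]
    simp [abs_of_nonneg (norm_nonneg β), inv_mul_cancel₀ hβn]
  have hsuppα : Function.support α' = Function.support α := by
    ext i
    have h : α' i = cα * α i := rfl
    simp [Function.mem_support, h, hcαn]
  have hsuppβ : Function.support β' = Function.support β := by
    ext i
    have h : β' i = cβ * β i := rfl
    simp [Function.mem_support, h, hcβn]
  have hmem : ‖(inner ℂ α' (Matrix.toEuclideanCLM (𝕜 := ℂ) m β') : ℂ)‖ ∈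
      { x : ℝ | ∃ ψ φ : EuclideanSpace ℂ Λ, ‖ψ‖ = 1 ∧ ‖φ‖ = 1 ∧
        (∀ i ∈ Function.support ψ, ∀ j ∈ Function.support φ, r < dist i j) ∧
        x = ‖(inner ℂ ψ (Matrix.toEuclideanCLM (𝕜 := ℂ) m φ) : ℂ)‖ } := by
    exact ⟨α', β', hnα', hnβ', by rw [hsuppα, hsuppβ]; exact hsep, rfl⟩
  have hle : ‖(inner ℂ α' (Matrix.toEuclideanCLM (𝕜 := ℂ) m β') : ℂ)‖ ≤ matDistNorm m r :=
    le_csSup (matDistNorm_bddAbove m r) hmem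
  have hkey : (inner ℂ α' (Matrix.toEuclideanCLM (𝕜 := ℂ) m β') : ℂ) =
      cα * (cβ * (inner ℂ α (Matrix.toEuclideanCLM (𝕜 := ℂ) m β) : ℂ)) := by
    have hconj : (starRingEnd ℂ) cα = cα := by
      rw [hcα, map_inv₀, Complex.conj_ofReal]
    rw [hα', hβ', map_smul, inner_smul_left, inner_smul_right, hconj]
  have hnorm : ‖(inner ℂ α' (Matrix.toEuclideanCLM (𝕜 := ℂ) m β') : ℂ)‖ =
      ‖α‖⁻¹ * (‖β‖⁻¹ * ‖(inner ℂ α (Matrix.toEuclideanCLM (𝕜 := ℂ) m β) : ℂ)‖) := by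
    rw [hkey, norm_mul, norm_mul, hcα, hcβ]
    simp [abs_of_nonneg (norm_nonneg α), abs_of_nonneg (norm_nonneg β)]
  rw [hnorm] at hle
  have h1 : ‖(inner ℂ α (Matrix.toEuclideanCLM (𝕜 := ℂ) m β) : ℂ)‖ =
      ‖α‖ * ‖β‖ * (‖α‖⁻¹ * (‖β‖⁻¹ * ‖(inner ℂ α (Matrix.toEuclideanCLM (𝕜 := ℂ) m β) : ℂ)‖)) := by
    field_simp
  rw [h1]
  calc ‖α‖ * ‖β‖ * (‖α‖⁻¹ * (‖β‖⁻¹ * ‖(inner ℂ α (Matrix.toEuclideanCLM (𝕜 := ℂ) m β) : ℂ)‖))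
      ≤ ‖α‖ * ‖β‖ * matDistNorm m r := by
        apply mul_le_mul_of_nonneg_left hle
        positivity
    _ = matDistNorm m r * (‖α‖ * ‖β‖) := by ring

/-- Truncated application bound: the projection of `m β` onto a region separated from
the support of `β` has small norm. -/
lemma norm_projVec_toCLM_le (m : Matrix Λ Λ ℂ) (r : ℝ) (S : Set Λ)
    (β : EuclideanSpace ℂ Λ)
    (hsep : ∀ i ∈ S, ∀ j ∈ Function.support β, r < dist i j) :
    ‖projVec S (Matrix.toEuclideanCLM (𝕜 := ℂ) m β)‖ ≤ matDistNorm m r * ‖β‖ := by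
  set γ := projVec S (Matrix.toEuclideanCLM (𝕜 := ℂ) m β) with hγ
  have hsplit : (inner ℂ γ (Matrix.toEuclideanCLM (𝕜 := ℂ) m β) : ℂ) = inner ℂ γ γ := by
    conv_lhs => rw [← projVec_add_compl S (Matrix.toEuclideanCLM (𝕜 := ℂ) m β)]
    rw [inner_add_right, ← hγ, inner_projVec_compl, add_zero]
  have hn2 : (‖γ‖ : ℝ) ^ 2 = ‖(inner ℂ γ (Matrix.toEuclideanCLM (𝕜 := ℂ) m β) : ℂ)‖ := by
    rw [hsplit, inner_self_eq_norm_sq_to_K (𝕜 := ℂ), norm_pow, RCLike.norm_ofReal,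
      abs_of_nonneg (norm_nonneg γ)]
  have hb : ‖(inner ℂ γ (Matrix.toEuclideanCLM (𝕜 := ℂ) m β) : ℂ)‖ ≤
      matDistNorm m r * (‖γ‖ * ‖β‖) := by
    apply inner_bound
    intro i hi j hj
    exact hsep i (support_projVec _ _ hi) j hj
  have h2 : ‖γ‖ ^ 2 ≤ matDistNorm m r * ‖β‖ * ‖γ‖ := by
    rw [hn2]
    calc ‖(inner ℂ γ (Matrix.toEuclideanCLM (𝕜 := ℂ) m β) : ℂ)‖
        ≤ matDistNorm m r * (‖γ‖ * ‖β‖) := hb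
      _ = matDistNorm m r * ‖β‖ * ‖γ‖ := by ring
  rcases eq_or_lt_of_le (norm_nonneg γ) with h0 | h0
  · rw [← h0]
    have := matDistNorm_nonneg m r
    positivity
  · have := h2
    rw [sq] at this
    exact le_of_mul_le_mul_right (by linarith [this]) h0

end Aux

set_option maxHeartbeats 2000000 in
set_option synthInstance.maxHeartbeats 1000000 in
/-- Bound on the double commutator [[v,h],h] at distance 2ℓ + R. -/
theorem double_commutator_distNorm_bound
    {Λ : Type*} [Fintype Λ] [DecidableEq Λ] [PseudoMetricSpace Λ]
    (J R ℓ : ℝ) (hJ : 0 < J) (hR : 0 < R) (hℓ : 0 < ℓ)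
    (v h : Matrix Λ Λ ℂ)
    (hvJ : matOpNorm v ≤ J) (hhJ : matOpNorm h ≤ J)
    (hvR : ∀ i j, R < dist i j → v i j = 0) :
    (∀ ψ φ : EuclideanSpace ℂ Λ, ‖ψ‖ = 1 → ‖φ‖ = 1 →
      (∀ i ∈ Function.support ψ, ∀ j ∈ Function.support φ, 2 * ℓ + R < dist i j) →
      ‖(inner ℂ ψ (Matrix.toEuclideanCLM (𝕜 := ℂ) ⁅⁅v, h⁆, h⁆ φ) : ℂ)‖ ≤
        8 * J ^ 2 * matDistNorm h ℓ) ∧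
    matDistNorm ⁅⁅v, h⁆, h⁆ (2 * ℓ + R) ≤ 8 * J ^ 2 * matDistNorm h ℓ := by
  set D := matDistNorm h ℓ with hDdef
  have hD0 : 0 ≤ D := matDistNorm_nonneg h ℓ
  set T : Matrix Λ Λ ℂ → (EuclideanSpace ℂ Λ →L[ℂ] EuclideanSpace ℂ Λ) :=
    fun m => Matrix.toEuclideanCLM (𝕜 := ℂ) m with hT
  have key : ∀ ψ φ : EuclideanSpace ℂ Λ, ‖ψ‖ = 1 → ‖φ‖ = 1 →
      (∀ i ∈ Function.support ψ, ∀ j ∈ Function.support φ, 2 * ℓ + R < dist i j) →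
      ‖(inner ℂ ψ (Matrix.toEuclideanCLM (𝕜 := ℂ) ⁅⁅v, h⁆, h⁆ φ) : ℂ)‖ ≤
        8 * J ^ 2 * D := by
    intro ψ φ hψ hφ hsep
    classical
    set X := Function.support ψ with hX
    set Y := Function.support φ with hY
    set N : Set Λ := {i | ∃ j ∈ Y, dist i j ≤ ℓ} with hN
    set N' : Set Λ := {i | ∃ x ∈ X, dist i x ≤ ℓ} with hN'
    -- conjugate transpose facts
    have hadjeq : Matrix.toEuclideanCLM (𝕜 := ℂ) v.conjTranspose =
        ContinuousLinearMap.adjoint (Matrix.toEuclideanCLM (𝕜 := ℂ) v) := by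
      rw [← Matrix.star_eq_conjTranspose, map_star, ContinuousLinearMap.star_eq_adjoint]
    have hvHnorm : matOpNorm v.conjTranspose ≤ J := by
      rw [matOpNorm, hadjeq]
      calc ‖ContinuousLinearMap.adjoint (Matrix.toEuclideanCLM (𝕜 := ℂ) v)‖
          = ‖Matrix.toEuclideanCLM (𝕜 := ℂ) v‖ :=
            LinearIsometryEquiv.norm_map ContinuousLinearMap.adjoint _
        _ ≤ J := hvJ
    have hadj : ∀ α : EuclideanSpace ℂ Λ,
        (inner ℂ ψ (Matrix.toEuclideanCLM (𝕜 := ℂ) v α) : ℂ) =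
        inner ℂ (Matrix.toEuclideanCLM (𝕜 := ℂ) v.conjTranspose ψ) α := by
      intro α
      rw [hadjeq]
      exact (ContinuousLinearMap.adjoint_inner_left _ _ _).symm
    have hvH0 : ∀ i j, R < dist i j → v.conjTranspose i j = 0 := by
      intro i j hij
      rw [Matrix.conjTranspose_apply, hvR j i (by rwa [dist_comm])]
      simp
    -- the vectors
    set Hφ := Matrix.toEuclideanCLM (𝕜 := ℂ) h φ with hHφ
    set p := projVec N Hφ with hp
    set q := projVec Nᶜ Hφ with hq
    set β := Matrix.toEuclideanCLM (𝕜 := ℂ) v φ with hβ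
    set Hβ := Matrix.toEuclideanCLM (𝕜 := ℂ) h β with hHβ
    set p' := projVec N' Hβ with hp'
    set q' := projVec N'ᶜ Hβ with hq'
    set ψs := Matrix.toEuclideanCLM (𝕜 := ℂ) v.conjTranspose ψ with hψs
    -- separation facts
    have sep1 : ∀ i ∈ (Nᶜ : Set Λ), ∀ j ∈ Function.support φ, ℓ < dist i j := by
      intro i hi j hj
      by_contra hc
      exact hi ⟨j, hj, le_of_not_gt hc⟩
    have sep2 : ∀ i ∈ Function.support ψs, ∀ j ∈ Function.support p, ℓ < dist i j := by
      intro i hi j hj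
      obtain ⟨x, hx, hix⟩ := support_toCLM v.conjTranspose ψ R hvH0 i hi
      obtain ⟨y, hy, hjy⟩ := support_projVec N Hφ hj
      have h4 := dist_triangle4 x i j y
      have h5 := hsep x hx y hy
      have h6 : dist x i = dist i x := dist_comm x i
      linarith
    have sep3 : ∀ i ∈ Function.support ψ, ∀ j ∈ Function.support
        (Matrix.toEuclideanCLM (𝕜 := ℂ) v p), ℓ < dist i j := by
      intro i hi j hj
      obtain ⟨n, hn, hjn⟩ := support_toCLM v p R hvR j hj
      obtain ⟨y, hy, hny⟩ := support_projVec N Hφ hn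
      have h4 := dist_triangle4 i j n y
      have h5 := hsep i hi y hy
      linarith
    have sep4 : ∀ i ∈ Function.support ψ, ∀ j ∈ Function.support q', ℓ < dist i j := by
      intro i hi j hj
      have hj' : j ∈ (N'ᶜ : Set Λ) := support_projVec N'ᶜ Hβ hj
      by_contra hc
      exact hj' ⟨i, hi, by rw [dist_comm]; exact le_of_not_gt hc⟩
    have sep5 : ∀ i ∈ N', ∀ j ∈ Function.support β, ℓ < dist i j := by
      intro i hi j hj
      obtain ⟨x, hx, hix⟩ := hi
      obtain ⟨y, hy, hjy⟩ := support_toCLM v φ R hvR j hj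
      have h4 := dist_triangle4 x i j y
      have h5 := hsep x hx y hy
      have h6 : dist x i = dist i x := dist_comm x i
      linarith
    -- norm facts
    have nHφ : ‖Hφ‖ ≤ J := by
      have := norm_toCLM_apply_le h hhJ φ
      rw [hφ, mul_one] at this
      exact this
    have np : ‖p‖ ≤ J := le_trans (norm_projVec_le _ _) nHφ
    have nq : ‖q‖ ≤ D := by
      have := norm_projVec_toCLM_le h ℓ Nᶜ φ sep1
      rw [hφ, mul_one] at this
      exact this
    have nβ : ‖β‖ ≤ J := by
      have := norm_toCLM_apply_le v hvJ φ
      rw [hφ, mul_one] at this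
      exact this
    have nHβ : ‖Hβ‖ ≤ J * J := by
      calc ‖Hβ‖ ≤ J * ‖β‖ := norm_toCLM_apply_le h hhJ β
        _ ≤ J * J := by gcongr
    have np' : ‖p'‖ ≤ D * J := by
      calc ‖p'‖ ≤ D * ‖β‖ := norm_projVec_toCLM_le h ℓ N' β sep5
        _ ≤ D * J := by gcongr
    have nq' : ‖q'‖ ≤ J * J := le_trans (norm_projVec_le _ _) nHβ
    have nψs : ‖ψs‖ ≤ J := by
      have := norm_toCLM_apply_le v.conjTranspose hvHnorm ψ
      rw [hψ, mul_one] at this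
      exact this
    -- three terms
    have TA : ‖(inner ℂ ψ (Matrix.toEuclideanCLM (𝕜 := ℂ) v
        (Matrix.toEuclideanCLM (𝕜 := ℂ) h Hφ)) : ℂ)‖ ≤ 2 * (J * J * D) := by
      have e : Matrix.toEuclideanCLM (𝕜 := ℂ) v (Matrix.toEuclideanCLM (𝕜 := ℂ) h Hφ) =
          Matrix.toEuclideanCLM (𝕜 := ℂ) v (Matrix.toEuclideanCLM (𝕜 := ℂ) h p) +
          Matrix.toEuclideanCLM (𝕜 := ℂ) v (Matrix.toEuclideanCLM (𝕜 := ℂ) h q) := by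
        rw [← map_add, ← map_add, hp, hq, projVec_add_compl]
      rw [e, inner_add_right]
      have b1 : ‖(inner ℂ ψ (Matrix.toEuclideanCLM (𝕜 := ℂ) v
          (Matrix.toEuclideanCLM (𝕜 := ℂ) h p)) : ℂ)‖ ≤ J * J * D := by
        rw [hadj]
        calc ‖(inner ℂ ψs (Matrix.toEuclideanCLM (𝕜 := ℂ) h p) : ℂ)‖
            ≤ D * (‖ψs‖ * ‖p‖) := inner_bound h ℓ ψs p sep2
          _ ≤ D * (J * J) := by gcongr
          _ = J * J * D := by ring
      have b2 : ‖(inner ℂ ψ (Matrix.toEuclideanCLM (𝕜 := ℂ) v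
          (Matrix.toEuclideanCLM (𝕜 := ℂ) h q)) : ℂ)‖ ≤ J * J * D := by
        calc ‖(inner ℂ ψ (Matrix.toEuclideanCLM (𝕜 := ℂ) v
            (Matrix.toEuclideanCLM (𝕜 := ℂ) h q)) : ℂ)‖
            ≤ ‖ψ‖ * ‖Matrix.toEuclideanCLM (𝕜 := ℂ) v
              (Matrix.toEuclideanCLM (𝕜 := ℂ) h q)‖ := norm_inner_le_norm _ _
          _ ≤ ‖ψ‖ * (J * ‖Matrix.toEuclideanCLM (𝕜 := ℂ) h q‖) := by
              gcongr
              exact norm_toCLM_apply_le v hvJ _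
          _ ≤ ‖ψ‖ * (J * (J * ‖q‖)) := by
              gcongr
              exact norm_toCLM_apply_le h hhJ _
          _ ≤ 1 * (J * (J * D)) := by rw [hψ]; gcongr
          _ = J * J * D := by ring
      calc ‖(inner ℂ ψ (Matrix.toEuclideanCLM (𝕜 := ℂ) v (Matrix.toEuclideanCLM (𝕜 := ℂ) h p)) : ℂ)
            + (inner ℂ ψ (Matrix.toEuclideanCLM (𝕜 := ℂ) v (Matrix.toEuclideanCLM (𝕜 := ℂ) h q)) : ℂ)‖
          ≤ _ + _ := norm_add_le _ _
        _ ≤ J * J * D + J * J * D := add_le_add b1 b2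
        _ = 2 * (J * J * D) := by ring
    have TB : ‖(inner ℂ ψ (Matrix.toEuclideanCLM (𝕜 := ℂ) h
        (Matrix.toEuclideanCLM (𝕜 := ℂ) v Hφ)) : ℂ)‖ ≤ 2 * (J * J * D) := by
      have e : Matrix.toEuclideanCLM (𝕜 := ℂ) h (Matrix.toEuclideanCLM (𝕜 := ℂ) v Hφ) =
          Matrix.toEuclideanCLM (𝕜 := ℂ) h (Matrix.toEuclideanCLM (𝕜 := ℂ) v p) +
          Matrix.toEuclideanCLM (𝕜 := ℂ) h (Matrix.toEuclideanCLM (𝕜 := ℂ) v q) := by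
        rw [← map_add, ← map_add, hp, hq, projVec_add_compl]
      rw [e, inner_add_right]
      have b1 : ‖(inner ℂ ψ (Matrix.toEuclideanCLM (𝕜 := ℂ) h
          (Matrix.toEuclideanCLM (𝕜 := ℂ) v p)) : ℂ)‖ ≤ J * J * D := by
        calc ‖(inner ℂ ψ (Matrix.toEuclideanCLM (𝕜 := ℂ) h
            (Matrix.toEuclideanCLM (𝕜 := ℂ) v p)) : ℂ)‖
            ≤ D * (‖ψ‖ * ‖Matrix.toEuclideanCLM (𝕜 := ℂ) v p‖) :=
              inner_bound h ℓ ψ (Matrix.toEuclideanCLM (𝕜 := ℂ) v p) sep3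
          _ ≤ D * (1 * (J * ‖p‖)) := by
              rw [hψ]
              gcongr
              exact norm_toCLM_apply_le v hvJ _
          _ ≤ D * (1 * (J * J)) := by gcongr
          _ = J * J * D := by ring
      have b2 : ‖(inner ℂ ψ (Matrix.toEuclideanCLM (𝕜 := ℂ) h
          (Matrix.toEuclideanCLM (𝕜 := ℂ) v q)) : ℂ)‖ ≤ J * J * D := by
        calc ‖(inner ℂ ψ (Matrix.toEuclideanCLM (𝕜 := ℂ) h
            (Matrix.toEuclideanCLM (𝕜 := ℂ) v q)) : ℂ)‖
            ≤ ‖ψ‖ * ‖Matrix.toEuclideanCLM (𝕜 := ℂ) h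
              (Matrix.toEuclideanCLM (𝕜 := ℂ) v q)‖ := norm_inner_le_norm _ _
          _ ≤ ‖ψ‖ * (J * ‖Matrix.toEuclideanCLM (𝕜 := ℂ) v q‖) := by
              gcongr
              exact norm_toCLM_apply_le h hhJ _
          _ ≤ ‖ψ‖ * (J * (J * ‖q‖)) := by
              gcongr
              exact norm_toCLM_apply_le v hvJ _
          _ ≤ 1 * (J * (J * D)) := by rw [hψ]; gcongr
          _ = J * J * D := by ring
      calc ‖(inner ℂ ψ (Matrix.toEuclideanCLM (𝕜 := ℂ) h (Matrix.toEuclideanCLM (𝕜 := ℂ) v p)) : ℂ)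
            + (inner ℂ ψ (Matrix.toEuclideanCLM (𝕜 := ℂ) h (Matrix.toEuclideanCLM (𝕜 := ℂ) v q)) : ℂ)‖
          ≤ _ + _ := norm_add_le _ _
        _ ≤ J * J * D + J * J * D := add_le_add b1 b2
        _ = 2 * (J * J * D) := by ring
    have TC : ‖(inner ℂ ψ (Matrix.toEuclideanCLM (𝕜 := ℂ) h
        (Matrix.toEuclideanCLM (𝕜 := ℂ) h β)) : ℂ)‖ ≤ 2 * (J * J * D) := by
      have e : Matrix.toEuclideanCLM (𝕜 := ℂ) h (Matrix.toEuclideanCLM (𝕜 := ℂ) h β) =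
          Matrix.toEuclideanCLM (𝕜 := ℂ) h p' + Matrix.toEuclideanCLM (𝕜 := ℂ) h q' := by
        rw [← map_add, hp', hq', ← hHβ, projVec_add_compl]
      rw [e, inner_add_right]
      have b1 : ‖(inner ℂ ψ (Matrix.toEuclideanCLM (𝕜 := ℂ) h p') : ℂ)‖ ≤ J * J * D := by
        calc ‖(inner ℂ ψ (Matrix.toEuclideanCLM (𝕜 := ℂ) h p') : ℂ)‖
            ≤ ‖ψ‖ * ‖Matrix.toEuclideanCLM (𝕜 := ℂ) h p'‖ := norm_inner_le_norm _ _
          _ ≤ ‖ψ‖ * (J * ‖p'‖) := by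
              gcongr
              exact norm_toCLM_apply_le h hhJ _
          _ ≤ 1 * (J * (D * J)) := by rw [hψ]; gcongr
          _ = J * J * D := by ring
      have b2 : ‖(inner ℂ ψ (Matrix.toEuclideanCLM (𝕜 := ℂ) h q') : ℂ)‖ ≤ J * J * D := by
        calc ‖(inner ℂ ψ (Matrix.toEuclideanCLM (𝕜 := ℂ) h q') : ℂ)‖
            ≤ D * (‖ψ‖ * ‖q'‖) := inner_bound h ℓ ψ q' sep4
          _ ≤ D * (1 * (J * J)) := by rw [hψ]; gcongr
          _ = J * J * D := by ring
      calc ‖(inner ℂ ψ (Matrix.toEuclideanCLM (𝕜 := ℂ) h p') : ℂ)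
            + (inner ℂ ψ (Matrix.toEuclideanCLM (𝕜 := ℂ) h q') : ℂ)‖
          ≤ _ + _ := norm_add_le _ _
        _ ≤ J * J * D + J * J * D := add_le_add b1 b2
        _ = 2 * (J * J * D) := by ring
    -- expand the double commutator
    have hexp : Matrix.toEuclideanCLM (𝕜 := ℂ) ⁅⁅v, h⁆, h⁆ φ =
        Matrix.toEuclideanCLM (𝕜 := ℂ) v (Matrix.toEuclideanCLM (𝕜 := ℂ) h Hφ)
        - Matrix.toEuclideanCLM (𝕜 := ℂ) h (Matrix.toEuclideanCLM (𝕜 := ℂ) v Hφ)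
        - (Matrix.toEuclideanCLM (𝕜 := ℂ) h (Matrix.toEuclideanCLM (𝕜 := ℂ) v Hφ)
          - Matrix.toEuclideanCLM (𝕜 := ℂ) h (Matrix.toEuclideanCLM (𝕜 := ℂ) h β)) := by
      rw [hHφ, hβ]
      simp only [Ring.lie_def, map_sub, map_mul, ContinuousLinearMap.sub_apply,
        ContinuousLinearMap.mul_apply, sub_mul, mul_sub, map_sub]
    rw [hexp, inner_sub_right, inner_sub_right, inner_sub_right]
    have final := calc
      ‖(inner ℂ ψ (Matrix.toEuclideanCLM (𝕜 := ℂ) v (Matrix.toEuclideanCLM (𝕜 := ℂ) h Hφ)) : ℂ)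
        - (inner ℂ ψ (Matrix.toEuclideanCLM (𝕜 := ℂ) h (Matrix.toEuclideanCLM (𝕜 := ℂ) v Hφ)) : ℂ)
        - ((inner ℂ ψ (Matrix.toEuclideanCLM (𝕜 := ℂ) h (Matrix.toEuclideanCLM (𝕜 := ℂ) v Hφ)) : ℂ)
          - (inner ℂ ψ (Matrix.toEuclideanCLM (𝕜 := ℂ) h (Matrix.toEuclideanCLM (𝕜 := ℂ) h β)) : ℂ))‖
          ≤ ‖(inner ℂ ψ (Matrix.toEuclideanCLM (𝕜 := ℂ) v (Matrix.toEuclideanCLM (𝕜 := ℂ) h Hφ)) : ℂ)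
            - (inner ℂ ψ (Matrix.toEuclideanCLM (𝕜 := ℂ) h (Matrix.toEuclideanCLM (𝕜 := ℂ) v Hφ)) : ℂ)‖
            + ‖(inner ℂ ψ (Matrix.toEuclideanCLM (𝕜 := ℂ) h (Matrix.toEuclideanCLM (𝕜 := ℂ) v Hφ)) : ℂ)
              - (inner ℂ ψ (Matrix.toEuclideanCLM (𝕜 := ℂ) h (Matrix.toEuclideanCLM (𝕜 := ℂ) h β)) : ℂ)‖ :=
            norm_sub_le _ _
      _ ≤ (‖(inner ℂ ψ (Matrix.toEuclideanCLM (𝕜 := ℂ) v (Matrix.toEuclideanCLM (𝕜 := ℂ) h Hφ)) : ℂ)‖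
            + ‖(inner ℂ ψ (Matrix.toEuclideanCLM (𝕜 := ℂ) h (Matrix.toEuclideanCLM (𝕜 := ℂ) v Hφ)) : ℂ)‖)
          + (‖(inner ℂ ψ (Matrix.toEuclideanCLM (𝕜 := ℂ) h (Matrix.toEuclideanCLM (𝕜 := ℂ) v Hφ)) : ℂ)‖
            + ‖(inner ℂ ψ (Matrix.toEuclideanCLM (𝕜 := ℂ) h (Matrix.toEuclideanCLM (𝕜 := ℂ) h β)) : ℂ)‖) :=
            add_le_add (norm_sub_le _ _) (norm_sub_le _ _)
      _ ≤ (2 * (J * J * D) + 2 * (J * J * D)) + (2 * (J * J * D) + 2 * (J * J * D)) :=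
            add_le_add (add_le_add TA TB) (add_le_add TB TC)
      _ = 8 * J ^ 2 * D := by ring
    exact final
  refine ⟨key, ?_⟩
  rw [matDistNorm]
  apply Real.sSup_le
  · rintro x ⟨ψ, φ, h1, h2, h3, rfl⟩
    exact key ψ φ h1 h2 h3
  · positivity
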